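/- Let k be a linearly ordered field with a compatible non-Archimedean absolute value |·| : k → ℝ≥0 (multiplicative, |x+y| ≤ max(|x|,|y|), and 0 ≤ a ≤ b implies |a| ≤ |b|). Then the signed valuation v±(x) = sgn(x)·|x| is a band morphism from the bandification of k to the real tropical band ℝ𝕋: it is multiplicative, preserves 0 and 1, and whenever Σ xᵢ = 0 in k, the family (v±(xᵢ)) lies in N_ℝ𝕋, i.e., either all values are 0 or max|v±(xᵢ)| is attained with both signs. -/

import Mathlib

/-- The null set of the real tropical band `ℝ𝕋`: all entries `0`, or the
maximum of the absolute values is attained with both signs. -/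
def RealTropNull (s : Multiset ℝ) : Prop :=
  (∀ x ∈ s, x = 0) ∨
    ∃ m : ℝ, 0 < m ∧ m ∈ s ∧ -m ∈ s ∧ ∀ x ∈ s, |x| ≤ m

private lemma ultra_max_attained {k : Type*} [Field k] [LinearOrder k] [IsStrictOrderedRing k] (v : k → NNReal)
    (hultra : ∀ x y, v (x + y) ≤ max (v x) (v y)) :
    ∀ t : Multiset k, t.sum ≠ 0 → ∃ x ∈ t, v t.sum ≤ v x := by
  intro t
  induction t using Multiset.induction with
  | empty => simp
  | cons a t ih =>
    intro _
    rw [Multiset.sum_cons]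
    rcases le_total (v t.sum) (v a) with h | h
    · exact ⟨a, Multiset.mem_cons_self a t,
        le_trans (hultra a t.sum) (max_le le_rfl h)⟩
    · by_cases h0 : t.sum = 0
      · exact ⟨a, Multiset.mem_cons_self a t, by simp [h0]⟩
      · obtain ⟨x, hx, hvx⟩ := ih h0
        exact ⟨x, Multiset.mem_cons_of_mem hx,
          le_trans (le_trans (hultra a t.sum) (max_le h le_rfl)) hvx⟩

theorem signed_valuation_is_band_morphism
    {k : Type*} [Field k] [LinearOrder k] [IsStrictOrderedRing k] (v : k → NNReal)
    (hv0 : ∀ x, v x = 0 ↔ x = 0) (hv1 : v 1 = 1)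
    (hmul : ∀ x y, v (x * y) = v x * v y)
    (hultra : ∀ x y, v (x + y) ≤ max (v x) (v y))
    (hcompat : ∀ a b : k, 0 ≤ a → a ≤ b → v a ≤ v b) :
    let vpm : k → ℝ := fun x => (SignType.sign x : ℝ) * (v x : ℝ)
    vpm 0 = 0 ∧ vpm 1 = 1 ∧ (∀ x y, vpm (x * y) = vpm x * vpm y) ∧
      ∀ s : Multiset k, s.sum = 0 → RealTropNull (s.map vpm) := by
  intro vpm
  have hvpm : ∀ x, vpm x = (SignType.sign x : ℝ) * (v x : ℝ) := fun _ => rfl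
  -- v (-x) = v x
  have hvneg1 : v (-1) = 1 := by
    have h1 : v (-1) * v (-1) = 1 := by rw [← hmul]; simpa using hv1
    have h2 : ((v (-1) : ℝ)) * (v (-1) : ℝ) = 1 := by exact_mod_cast h1
    rcases mul_self_eq_one_iff.mp h2 with h | h
    · exact_mod_cast h
    · exfalso; have := (v (-1)).coe_nonneg; linarith
  have hvneg : ∀ x, v (-x) = v x := by
    intro x
    have : v (-x) = v (-1) * v x := by rw [← hmul]; ring_nf
    rw [this, hvneg1, one_mul]
  refine ⟨by simp [hvpm], by simp [hvpm, hv1], ?_, ?_⟩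
  · intro x y
    rw [hvpm, hvpm, hvpm, hmul, sign_mul]
    push_cast
    ring
  · intro s hsum
    by_cases hall : ∀ x ∈ s, x = 0
    · left
      intro y hy
      obtain ⟨x, hx, rfl⟩ := Multiset.mem_map.mp hy
      simp [hvpm, hall x hx]
    · right
      push_neg at hall
      obtain ⟨x0, hx0, hx0ne⟩ := hall
      set tp := s.filter (fun x => 0 ≤ x) with htp
      set tn := s.filter (fun x => ¬ 0 ≤ x) with htn
      have hsplit : tp + tn = s := Multiset.filter_add_not _ s
      have hPsum : tp.sum + tn.sum = 0 := by
        rw [← Multiset.sum_add, hsplit]; exact hsum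
      set P := tp.sum with hPdef
      have htppos : ∀ x ∈ tp, (0:k) ≤ x := fun x hx => (Multiset.mem_filter.mp hx).2
      have htnneg : ∀ x ∈ tn, x < 0 := fun x hx =>
        lt_of_not_ge (Multiset.mem_filter.mp hx).2
      set tm := tn.map (fun x => -x) with htm
      have htmpos : ∀ x ∈ tm, (0:k) ≤ x := by
        intro x hx
        obtain ⟨y, hy, rfl⟩ := Multiset.mem_map.mp hx
        exact le_of_lt (neg_pos.mpr (htnneg y hy))
      have htmsum : tm.sum = P := by
        have : tm.sum = -tn.sum := by
          simp [htm, Multiset.sum_map_neg']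
        rw [this]; linarith
      -- P > 0
      have hP : 0 < P := by
        rcases hx0ne.lt_or_gt with h | h
        · have hmem : -x0 ∈ tm := Multiset.mem_map.mpr
            ⟨x0, Multiset.mem_filter.mpr ⟨hx0, not_le.mpr h⟩, rfl⟩
          have := Multiset.single_le_sum htmpos _ hmem
          rw [htmsum] at this
          linarith
        · have hmem : x0 ∈ tp := Multiset.mem_filter.mpr ⟨hx0, le_of_lt h⟩
          exact lt_of_lt_of_le h (Multiset.single_le_sum htppos _ hmem)
      have hvP : v P ≠ 0 := fun h => absurd ((hv0 P).mp h) (ne_of_gt hP)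
      have hmpos : (0:ℝ) < v P := by
        have := (v P).coe_nonneg
        rcases this.lt_or_eq with h | h
        · exact h
        · exact absurd (by exact_mod_cast h.symm) hvP
      -- positive witness
      obtain ⟨xp, hxp, hxple⟩ := ultra_max_attained v hultra tp (ne_of_gt hP)
      have hxpeq : v xp = v P :=
        le_antisymm (hcompat _ _ (htppos _ hxp) (Multiset.single_le_sum htppos _ hxp)) hxple
      have hxppos : 0 < xp := by
        rcases (htppos _ hxp).lt_or_eq with h | h
        · exact h
        · exfalso; apply hvP; rw [← hxpeq, ← h]; exact (hv0 0).mpr rfl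
      -- negative witness
      obtain ⟨ym, hym, hymle⟩ := by
        have : tm.sum ≠ 0 := by rw [htmsum]; exact ne_of_gt hP
        exact ultra_max_attained v hultra tm this
      rw [htmsum] at hymle
      obtain ⟨yn, hyn, rfl⟩ := Multiset.mem_map.mp hym
      have hynle : v (-yn) ≤ v P := by
        have := Multiset.single_le_sum htmpos _ hym
        rw [htmsum] at this
        exact hcompat _ _ (htmpos _ hym) this
      have hyneq : v yn = v P := by
        rw [← hvneg yn]; exact le_antisymm hynle hymle
      have hynneg : yn < 0 := htnneg _ hyn
      -- the bound
      have hbound : ∀ w ∈ s, (v w : ℝ) ≤ v P := by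
        intro w hw
        by_cases h : 0 ≤ w
        · have hmem : w ∈ tp := Multiset.mem_filter.mpr ⟨hw, h⟩
          exact_mod_cast hcompat _ _ h (Multiset.single_le_sum htppos _ hmem)
        · have hmem : -w ∈ tm := Multiset.mem_map.mpr
            ⟨w, Multiset.mem_filter.mpr ⟨hw, h⟩, rfl⟩
          have := hcompat _ _ (htmpos _ hmem) ((Multiset.single_le_sum htmpos _ hmem).trans_eq htmsum)
          rw [hvneg] at this
          exact_mod_cast this
      refine ⟨(v P : ℝ), hmpos, ?_, ?_, ?_⟩
      · refine Multiset.mem_map.mpr ⟨xp, ?_, ?_⟩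
        · rw [← hsplit]; exact Multiset.mem_add.mpr (Or.inl hxp)
        · rw [hvpm, sign_pos hxppos, hxpeq]; simp
      · refine Multiset.mem_map.mpr ⟨yn, ?_, ?_⟩
        · rw [← hsplit]; exact Multiset.mem_add.mpr (Or.inr hyn)
        · rw [hvpm, sign_neg hynneg, hyneq]; simp
      · intro z hz
        obtain ⟨w, hw, rfl⟩ := Multiset.mem_map.mp hz
        rw [hvpm]
        rcases lt_trichotomy w 0 with h | h | h
        · rw [sign_neg h]; rw [abs_mul]
          simp only [SignType.coe_neg_one, abs_neg, abs_one, one_mul,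
            NNReal.abs_eq]
          exact hbound w hw
        · simp [h, hmpos.le]
        · rw [sign_pos h, abs_mul]
          simp only [SignType.coe_one, abs_one, one_mul, NNReal.abs_eq]
          exact hbound w hw
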